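/- Consider the singular ODE initial value problem dθᵢ/dr = −(λᵢ/r)θᵢ + hᵢ(r, θ) for i = 1,…,m with θ(0) = 0, where each λᵢ ≥ 0 and h is Lipschitz in θ with constant M near the origin. Then there exists a unique continuous solution on a small interval [0, r₀]. -/

import Mathlib

open Set intervalIntegral MeasureTheory

/-! ### Auxiliary development -/

/-- The basic integral operator `r ↦ r^(-λ) ∫₀^r t^λ g t dt`. -/
noncomputable def Qf (lam : ℝ) (g : ℝ → ℝ) (r : ℝ) : ℝ :=
  r ^ (-lam) * ∫ t in (0:ℝ)..r, t ^ lam * g t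

lemma Qf_zero (lam : ℝ) (g : ℝ → ℝ) : Qf lam g 0 = 0 := by
  simp [Qf]

lemma cont_integrand {lam : ℝ} (hl : 0 ≤ lam) {g : ℝ → ℝ} (hg : Continuous g) :
    Continuous fun t : ℝ => t ^ lam * g t :=
  (Real.continuous_rpow_const hl).mul hg

lemma Qf_estimate {lam C r : ℝ} (hl : 0 ≤ lam) (hr : 0 < r) {g : ℝ → ℝ}
    (hC : ∀ t ∈ Icc (0:ℝ) r, |g t| ≤ C) :
    |Qf lam g r| ≤ C * r := by
  have hbound : ∀ t ∈ Set.uIoc (0:ℝ) r, ‖t ^ lam * g t‖ ≤ r ^ lam * C := by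
    intro t ht
    rw [uIoc_of_le hr.le] at ht
    have ht0 : (0:ℝ) ≤ t := ht.1.le
    rw [Real.norm_eq_abs, abs_mul, abs_of_nonneg (Real.rpow_nonneg ht0 _)]
    exact mul_le_mul (Real.rpow_le_rpow ht0 ht.2 hl) (hC t ⟨ht0, ht.2⟩) (abs_nonneg _)
      (Real.rpow_nonneg hr.le _)
  have habs : |∫ t in (0:ℝ)..r, t ^ lam * g t| ≤ r ^ lam * C * r := by
    calc |∫ t in (0:ℝ)..r, t ^ lam * g t| ≤ r ^ lam * C * |r - 0| :=
          intervalIntegral.norm_integral_le_of_norm_le_const hbound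
      _ = r ^ lam * C * r := by rw [sub_zero, abs_of_nonneg hr.le]
  have hpow : (0:ℝ) < r ^ lam := Real.rpow_pos_of_pos hr _
  rw [Qf, abs_mul, abs_of_nonneg (Real.rpow_nonneg hr.le (-lam)), Real.rpow_neg hr.le]
  calc (r ^ lam)⁻¹ * |∫ t in (0:ℝ)..r, t ^ lam * g t|
      ≤ (r ^ lam)⁻¹ * (r ^ lam * C * r) :=
        mul_le_mul_of_nonneg_left habs (inv_nonneg.mpr hpow.le)
    _ = C * r := by field_simp

lemma Qf_sub {lam : ℝ} (hl : 0 ≤ lam) {g₁ g₂ : ℝ → ℝ} (hg₁ : Continuous g₁)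
    (hg₂ : Continuous g₂) (r : ℝ) :
    Qf lam g₁ r - Qf lam g₂ r = Qf lam (fun t => g₁ t - g₂ t) r := by
  unfold Qf
  rw [← mul_sub, ← intervalIntegral.integral_sub
    ((cont_integrand hl hg₁).intervalIntegrable _ _)
    ((cont_integrand hl hg₂).intervalIntegrable _ _)]
  congr 1
  apply intervalIntegral.integral_congr
  intro t _
  ring

lemma Qf_contOn {lam r₀ : ℝ} (hl : 0 ≤ lam) {g : ℝ → ℝ} (hg : Continuous g) :
    ContinuousOn (Qf lam g) (Icc 0 r₀) := by
  intro r hr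
  rcases eq_or_lt_of_le hr.1 with h0 | h0
  · -- r = 0
    have hr0 : r = 0 := h0.symm
    subst hr0
    obtain ⟨C, hC⟩ := isCompact_Icc.exists_bound_of_continuousOn
      (s := Icc (0:ℝ) r₀) hg.continuousOn
    have hCg : ∀ t ∈ Icc (0:ℝ) r₀, |g t| ≤ C := by
      intro t ht; exact hC t ht
    unfold ContinuousWithinAt
    rw [Qf_zero]
    apply squeeze_zero_norm' (a := fun s => C * s)
    · apply eventually_nhdsWithin_of_forall
      intro s hs
      rcases eq_or_lt_of_le hs.1 with hs0 | hs0
      · rw [← hs0, Qf_zero]; simp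
      · exact Qf_estimate hl hs0 (fun t ht => hCg t ⟨ht.1, le_trans ht.2 hs.2⟩)
    · have : Filter.Tendsto (fun s : ℝ => C * s) (nhds 0) (nhds (C * 0)) :=
        (continuous_const.mul continuous_id).tendsto 0
      rw [mul_zero] at this
      exact this.mono_left nhdsWithin_le_nhds
  · apply ContinuousAt.continuousWithinAt
    apply ContinuousAt.mul
    · exact Real.continuousAt_rpow_const r _ (Or.inl h0.ne')
    · exact (intervalIntegral.continuous_primitive
        (fun a b => (cont_integrand hl hg).intervalIntegrable a b) 0).continuousAt

lemma Qf_hasDerivAt {lam r : ℝ} (hl : 0 ≤ lam) (hr : 0 < r) {g : ℝ → ℝ}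
    (hg : Continuous g) :
    HasDerivAt (Qf lam g) (-(lam / r) * Qf lam g r + g r) r := by
  have hu : Continuous fun t : ℝ => t ^ lam * g t := cont_integrand hl hg
  have hGd : HasDerivAt (fun s => ∫ t in (0:ℝ)..s, t ^ lam * g t) (r ^ lam * g r) r :=
    intervalIntegral.integral_hasDerivAt_right (hu.intervalIntegrable _ _)
      (hu.stronglyMeasurableAtFilter _ _) hu.continuousAt
  have hpd : HasDerivAt (fun s : ℝ => s ^ (-lam)) (-lam * r ^ (-lam - 1)) r :=
    Real.hasDerivAt_rpow_const (Or.inl hr.ne')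
  have hprod := hpd.mul hGd
  refine hprod.congr_deriv (Eq.symm ?_)
  have hinv : r ^ (-lam) * r ^ lam = 1 := by
    rw [Real.rpow_neg hr.le]
    exact inv_mul_cancel₀ (Real.rpow_pos_of_pos hr _).ne'
  have hpow : r ^ (-lam - 1) = r ^ (-lam) / r := by
    rw [show -lam - 1 = -lam + (-1) by ring, Real.rpow_add hr, Real.rpow_neg_one]
    ring
  rw [Qf, hpow,
    show r ^ (-lam) * (r ^ lam * g r) = r ^ (-lam) * r ^ lam * g r by ring, hinv, one_mul]
  ring

/-- clamp to `[0, r₀]`. -/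
noncomputable def clampI (r₀ t : ℝ) : ℝ := max 0 (min t r₀)

lemma clampI_mem {r₀ : ℝ} (h : 0 ≤ r₀) (t : ℝ) : clampI r₀ t ∈ Icc 0 r₀ :=
  ⟨le_max_left _ _, max_le h (min_le_right _ _)⟩

lemma clampI_of_mem {r₀ t : ℝ} (h : t ∈ Icc 0 r₀) : clampI r₀ t = t := by
  unfold clampI
  rw [min_eq_left h.2, max_eq_right h.1]

lemma continuous_clampI (r₀ : ℝ) : Continuous (clampI r₀) :=
  continuous_const.max (continuous_id.min continuous_const)

/-- `θ` is a continuous solution on `[0, r₀]` of the singular ODE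
`dθᵢ/dr = −(λᵢ/r)θᵢ + hᵢ(r, θ)` with `θ(0) = 0`. -/
def IsSolODE (m : ℕ) (lam : Fin m → ℝ) (h : ℝ → (Fin m → ℝ) → Fin m → ℝ)
    (r₀ : ℝ) (θ : ℝ → Fin m → ℝ) : Prop :=
  ContinuousOn θ (Set.Icc 0 r₀) ∧ θ 0 = 0 ∧
    ∀ r ∈ Set.Ioc (0 : ℝ) r₀,
      HasDerivWithinAt θ (fun i => -(lam i / r) * θ r i + h r (θ r) i) (Set.Ioc 0 r₀) r

section Main

variable {m : ℕ} {lam : Fin m → ℝ} {M : NNReal}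
  {h : ℝ → (Fin m → ℝ) → Fin m → ℝ} {r₀ : ℝ}

/-- continuity of the clamped composition -/
lemma cont_g (hcont : Continuous fun p : ℝ × (Fin m → ℝ) => h p.1 p.2)
    {θ : ℝ → Fin m → ℝ} (hθ : ContinuousOn θ (Icc 0 r₀)) (h0 : 0 ≤ r₀) (i : Fin m) :
    Continuous fun t => h t (θ (clampI r₀ t)) i := by
  have hΘ : Continuous fun t => θ (clampI r₀ t) :=
    hθ.comp_continuous (continuous_clampI r₀) (clampI_mem h0)
  exact (continuous_apply i).comp (hcont.comp (continuous_id.prodMk hΘ))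

/-- Uniqueness for the integral equation. -/
lemma intEq_unique (hlam : ∀ i, 0 ≤ lam i)
    (hlip : ∀ r : ℝ, LipschitzWith M (h r))
    (hcont : Continuous fun p : ℝ × (Fin m → ℝ) => h p.1 p.2)
    (hr₀ : 0 < r₀) (hM : (M : ℝ) * r₀ ≤ 1 / 2)
    (θ₁ θ₂ : ℝ → Fin m → ℝ)
    (hc₁ : ContinuousOn θ₁ (Icc 0 r₀)) (hc₂ : ContinuousOn θ₂ (Icc 0 r₀))
    (hint₁ : ∀ r ∈ Icc (0:ℝ) r₀, ∀ i,
      θ₁ r i = Qf (lam i) (fun t => h t (θ₁ (clampI r₀ t)) i) r)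
    (hint₂ : ∀ r ∈ Icc (0:ℝ) r₀, ∀ i,
      θ₂ r i = Qf (lam i) (fun t => h t (θ₂ (clampI r₀ t)) i) r) :
    EqOn θ₁ θ₂ (Icc 0 r₀) := by
  have h0r₀ : (0:ℝ) ≤ r₀ := hr₀.le
  set D : ℝ → ℝ := fun r => dist (θ₁ r) (θ₂ r) with hD
  have hDc : ContinuousOn D (Icc 0 r₀) := continuous_dist.comp_continuousOn (hc₁.prodMk hc₂)
  obtain ⟨c₀, hc₀mem, hc₀max⟩ := isCompact_Icc.exists_isMaxOn
    (Set.nonempty_Icc.2 h0r₀) hDc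
  set S : ℝ := D c₀ with hS
  have hS0 : 0 ≤ S := dist_nonneg
  have hle : ∀ r ∈ Icc (0:ℝ) r₀, D r ≤ S := fun r hr => hc₀max hr
  have key : ∀ r ∈ Icc (0:ℝ) r₀, D r ≤ (M : ℝ) * r₀ * S := by
    intro r hr
    rcases eq_or_lt_of_le hr.1 with hr0 | hr0
    · have e1 : θ₁ r = θ₂ r := by
        funext i
        rw [hint₁ r hr i, hint₂ r hr i, ← hr0, Qf_zero, Qf_zero]
      simp only [hD, e1, dist_self]
      positivity
    · rw [hD]
      refine (dist_pi_le_iff (by positivity)).2 fun i => ?_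
      rw [Real.dist_eq, hint₁ r hr i, hint₂ r hr i]
      have hg₁ := cont_g hcont hc₁ h0r₀ i
      have hg₂ := cont_g hcont hc₂ h0r₀ i
      rw [Qf_sub (hlam i) hg₁ hg₂]
      have hest : |Qf (lam i)
          (fun t => h t (θ₁ (clampI r₀ t)) i - h t (θ₂ (clampI r₀ t)) i) r|
          ≤ ((M : ℝ) * S) * r := by
        apply Qf_estimate (hlam i) hr0
        intro t _
        have hmem := clampI_mem h0r₀ t
        calc |h t (θ₁ (clampI r₀ t)) i - h t (θ₂ (clampI r₀ t)) i|
            ≤ dist (h t (θ₁ (clampI r₀ t))) (h t (θ₂ (clampI r₀ t))) := by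
              rw [← Real.dist_eq]; exact dist_le_pi_dist _ _ i
          _ ≤ (M : ℝ) * dist (θ₁ (clampI r₀ t)) (θ₂ (clampI r₀ t)) :=
              (hlip t).dist_le_mul _ _
          _ ≤ (M : ℝ) * S :=
              mul_le_mul_of_nonneg_left (hle _ hmem) M.coe_nonneg
      have hr₀le : ((M : ℝ) * S) * r ≤ (M : ℝ) * r₀ * S :=
        calc ((M : ℝ) * S) * r ≤ ((M : ℝ) * S) * r₀ :=
              mul_le_mul_of_nonneg_left hr.2 (mul_nonneg M.coe_nonneg hS0)
          _ = (M : ℝ) * r₀ * S := by ring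
      exact le_trans hest hr₀le
  have hSS : S ≤ (M : ℝ) * r₀ * S := key c₀ hc₀mem
  have hS_half : (M : ℝ) * r₀ * S ≤ (1 / 2) * S :=
    mul_le_mul_of_nonneg_right hM hS0
  have hSzero : S = 0 := by linarith
  intro r hr
  have : D r ≤ 0 := by
    have := hle r hr
    rw [hSzero] at this
    exact this
  have : D r = 0 := le_antisymm this dist_nonneg
  exact dist_le_zero.1 (le_of_eq this)

/-- Any solution of the ODE satisfies the integral equation. -/
lemma sol_to_intEq (hlam : ∀ i, 0 ≤ lam i)
    (hcont : Continuous fun p : ℝ × (Fin m → ℝ) => h p.1 p.2)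
    (hr₀ : 0 < r₀) {θ : ℝ → Fin m → ℝ}
    (hsol : IsSolODE m lam h r₀ θ) :
    ∀ r ∈ Icc (0:ℝ) r₀, ∀ i,
      θ r i = Qf (lam i) (fun t => h t (θ (clampI r₀ t)) i) r := by
  obtain ⟨hθc, hθ0, hθd⟩ := hsol
  have h0r₀ : (0:ℝ) ≤ r₀ := hr₀.le
  intro r hr i
  rcases eq_or_lt_of_le hr.1 with hr0 | hr0
  · rw [← hr0, Qf_zero, hθ0]
    rfl
  · -- r ∈ Ioc 0 r₀
    set g : ℝ → ℝ := fun t => h t (θ (clampI r₀ t)) i with hg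
    have hgc : Continuous g := cont_g hcont hθc h0r₀ i
    have hu : Continuous fun t : ℝ => t ^ lam i * g t := cont_integrand (hlam i) hgc
    set Θ : ℝ → Fin m → ℝ := fun t => θ (clampI r₀ t) with hΘdef
    have hΘc : Continuous Θ := hθc.comp_continuous (continuous_clampI r₀) (clampI_mem h0r₀)
    set φ : ℝ → ℝ := fun s => s ^ lam i * Θ s i with hφ
    have hφc : Continuous φ :=
      (Real.continuous_rpow_const (hlam i)).mul ((continuous_apply i).comp hΘc)
    have hφ0 : φ 0 = 0 := by
      have : Θ 0 = 0 := by
        rw [hΘdef]; simp only; rw [clampI_of_mem (left_mem_Icc.2 h0r₀), hθ0]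
      simp [hφ, this]
    have hftc : ∫ t in (0:ℝ)..r, t ^ lam i * g t = φ r - φ 0 := by
      apply intervalIntegral.integral_eq_sub_of_hasDeriv_right_of_le hr0.le
        hφc.continuousOn _ (hu.intervalIntegrable _ _)
      intro x hx
      have hx0 : 0 < x := hx.1
      have hxr₀ : x < r₀ := lt_of_lt_of_le hx.2 hr.2
      have hxIoc : x ∈ Ioc (0:ℝ) r₀ := ⟨hx0, hxr₀.le⟩
      -- derivative of component of θ within Ioc 0 r₀
      have hθdx := hθd x hxIoc
      have hcomp : HasDerivWithinAt (fun s => θ s i)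
          (-(lam i / x) * θ x i + h x (θ x) i) (Ioc 0 r₀) x :=
        hasDerivWithinAt_pi.1 hθdx i
      -- transfer to Θ
      have heq : EqOn (fun s => Θ s i) (fun s => θ s i) (Ioc 0 r₀) := by
        intro s hs
        simp only [hΘdef]
        rw [clampI_of_mem (Ioc_subset_Icc_self hs)]
      have hΘx : Θ x i = θ x i := by
        simp only [hΘdef]; rw [clampI_of_mem (Ioc_subset_Icc_self hxIoc)]
      have hcompΘ : HasDerivWithinAt (fun s => Θ s i)
          (-(lam i / x) * θ x i + h x (θ x) i) (Ioc 0 r₀) x :=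
        hcomp.congr heq hΘx
      -- within Ioi x
      have hmem : Ioc (0:ℝ) r₀ ∈ nhdsWithin x (Ioi x) := by
        apply mem_nhdsWithin.2
        exact ⟨Iio r₀, isOpen_Iio, hxr₀, fun y hy => ⟨lt_trans hx0 hy.2, le_of_lt hy.1⟩⟩
      have hcompΘ' : HasDerivWithinAt (fun s => Θ s i)
          (-(lam i / x) * θ x i + h x (θ x) i) (Ioi x) x :=
        hcompΘ.mono_of_mem_nhdsWithin hmem
      have hpow : HasDerivWithinAt (fun s : ℝ => s ^ lam i)
          (lam i * x ^ (lam i - 1)) (Ioi x) x :=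
        (Real.hasDerivAt_rpow_const (Or.inl hx0.ne')).hasDerivWithinAt
      have hprod := hpow.mul hcompΘ'
      refine hprod.congr_deriv (Eq.symm ?_)
      -- target: x ^ lam i * g x = λ x^(λ-1) Θ x i + x^λ (-(λ/x) θ x i + h x (θ x) i)
      have hgx : g x = h x (θ x) i := by
        rw [hg]; simp only
        rw [clampI_of_mem (Ioc_subset_Icc_self hxIoc)]
      have hx1 : x ^ (lam i - 1) = x ^ lam i / x := by
        rw [Real.rpow_sub hx0, Real.rpow_one]
      rw [hgx, hΘx, hx1]
      field_simp
      ring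
    rw [hφ0, sub_zero] at hftc
    -- θ r i = r^(-λ) * (r^λ * Θ r i)
    have hΘr : Θ r i = θ r i := by
      simp only [hΘdef]; rw [clampI_of_mem hr]
    have hinv : r ^ (-(lam i)) * r ^ lam i = 1 := by
      rw [Real.rpow_neg hr0.le]
      exact inv_mul_cancel₀ (Real.rpow_pos_of_pos hr0 _).ne'
    have hQ : Qf (lam i) g r = r ^ (-(lam i)) * φ r := by
      unfold Qf; rw [hftc]
    rw [hQ]
    show θ r i = r ^ (-lam i) * (r ^ lam i * Θ r i)
    rw [hΘr, ← mul_assoc, hinv, one_mul]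

end Main

theorem stmt_7 (m : ℕ) (lam : Fin m → ℝ) (hlam : ∀ i, 0 ≤ lam i)
    (R : ℝ) (hR : 0 < R) (M : NNReal)
    (h : ℝ → (Fin m → ℝ) → Fin m → ℝ)
    (hcont : Continuous fun p : ℝ × (Fin m → ℝ) => h p.1 p.2)
    (hlip : ∀ r : ℝ, LipschitzWith M (h r)) :
    ∃ r₀ : ℝ, 0 < r₀ ∧ r₀ ≤ R ∧ (∃ θ, IsSolODE m lam h r₀ θ) ∧
      ∀ θ₁ θ₂, IsSolODE m lam h r₀ θ₁ → IsSolODE m lam h r₀ θ₂ →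
        Set.EqOn θ₁ θ₂ (Set.Icc 0 r₀) := by
  set r₀ : ℝ := min R ((2 * (M : ℝ) + 1)⁻¹) with hr₀def
  have hden : (0:ℝ) < 2 * (M : ℝ) + 1 := by positivity
  have hr₀pos : 0 < r₀ := lt_min hR (inv_pos.2 hden)
  have h0r₀ : (0:ℝ) ≤ r₀ := hr₀pos.le
  have hMr₀ : (M : ℝ) * r₀ ≤ 1 / 2 := by
    have h1 : r₀ ≤ (2 * (M : ℝ) + 1)⁻¹ := min_le_right _ _
    have h2 : (M : ℝ) * r₀ ≤ (M : ℝ) * (2 * (M : ℝ) + 1)⁻¹ :=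
      mul_le_mul_of_nonneg_left h1 M.coe_nonneg
    have h3 : (M : ℝ) * (2 * (M : ℝ) + 1)⁻¹ ≤ 1 / 2 := by
      rw [mul_inv_le_iff₀ hden]
      nlinarith [M.coe_nonneg]
    linarith
  refine ⟨r₀, hr₀pos, min_le_left _ _, ?_, ?_⟩
  · -- Existence via contraction mapping
    set X := C(Icc (0:ℝ) r₀, Fin m → ℝ)
    have hext : ∀ f : X, Continuous fun t : ℝ => f (projIcc 0 r₀ h0r₀ t) :=
      fun f => f.continuous.comp continuous_projIcc
    have hgcont : ∀ (f : X) (i : Fin m),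
        Continuous fun t => h t (f (projIcc 0 r₀ h0r₀ t)) i := by
      intro f i
      exact (continuous_apply i).comp (hcont.comp (continuous_id.prodMk (hext f)))
    set T : X → X := fun f =>
      ⟨fun x => fun i => Qf (lam i) (fun t => h t (f (projIcc 0 r₀ h0r₀ t)) i) ↑x, by
        apply continuous_pi
        intro i
        exact (Qf_contOn (hlam i) (hgcont f i)).comp_continuous
          continuous_subtype_val (fun x => x.2)⟩ with hT
    have hTdist : ∀ f g : X, dist (T f) (T g) ≤ (1 / 2) * dist f g := by
      intro f g
      rw [ContinuousMap.dist_le (by positivity)]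
      intro x
      rw [dist_pi_le_iff (by positivity)]
      intro i
      show dist (Qf (lam i) (fun t => h t (f (projIcc 0 r₀ h0r₀ t)) i) ↑x)
        (Qf (lam i) (fun t => h t (g (projIcc 0 r₀ h0r₀ t)) i) ↑x) ≤ 1 / 2 * dist f g
      rw [Real.dist_eq, Qf_sub (hlam i) (hgcont f i) (hgcont g i)]
      rcases eq_or_lt_of_le x.2.1 with hx0 | hx0
      · rw [← hx0, Qf_zero]
        simp only [abs_zero]
        positivity
      · have hest : |Qf (lam i) (fun t =>
            h t (f (projIcc 0 r₀ h0r₀ t)) i - h t (g (projIcc 0 r₀ h0r₀ t)) i) ↑x|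
            ≤ ((M : ℝ) * dist f g) * ↑x := by
          apply Qf_estimate (hlam i) hx0
          intro t _
          calc |h t (f (projIcc 0 r₀ h0r₀ t)) i - h t (g (projIcc 0 r₀ h0r₀ t)) i|
              ≤ dist (h t (f (projIcc 0 r₀ h0r₀ t))) (h t (g (projIcc 0 r₀ h0r₀ t))) := by
                rw [← Real.dist_eq]; exact dist_le_pi_dist _ _ i
            _ ≤ (M : ℝ) * dist (f (projIcc 0 r₀ h0r₀ t)) (g (projIcc 0 r₀ h0r₀ t)) :=
                (hlip t).dist_le_mul _ _
            _ ≤ (M : ℝ) * dist f g :=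
                mul_le_mul_of_nonneg_left (ContinuousMap.dist_apply_le_dist _) M.coe_nonneg
        calc |Qf (lam i) (fun t =>
            h t (f (projIcc 0 r₀ h0r₀ t)) i - h t (g (projIcc 0 r₀ h0r₀ t)) i) ↑x|
            ≤ ((M : ℝ) * dist f g) * ↑x := hest
          _ ≤ (M : ℝ) * r₀ * dist f g :=
              calc ((M : ℝ) * dist f g) * ↑x ≤ ((M : ℝ) * dist f g) * r₀ :=
                    mul_le_mul_of_nonneg_left x.2.2
                      (mul_nonneg M.coe_nonneg dist_nonneg)
                _ = (M : ℝ) * r₀ * dist f g := by ring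
          _ ≤ 1 / 2 * dist f g :=
              mul_le_mul_of_nonneg_right hMr₀ dist_nonneg
    have hcoe : (((1 : NNReal) / 2 : NNReal) : ℝ) = 1 / 2 := by
      push_cast; norm_num
    have hTcontr : ContractingWith ((1 : NNReal) / 2) T := by
      constructor
      · rw [← NNReal.coe_lt_coe, hcoe]; norm_num
      · apply LipschitzWith.of_dist_le_mul
        intro f g
        rw [hcoe]
        exact hTdist f g
    have : Nonempty X := ⟨ContinuousMap.const _ 0⟩
    set f : X := hTcontr.fixedPoint T with hf
    have hfix : T f = f := hTcontr.fixedPoint_isFixedPt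
    set θ : ℝ → Fin m → ℝ := fun t => f (projIcc 0 r₀ h0r₀ t) with hθ
    have hθcont : Continuous θ := hext f
    have hθeq : ∀ r ∈ Icc (0:ℝ) r₀, ∀ i,
        θ r i = Qf (lam i) (fun t => h t (θ t) i) r := by
      intro r hr i
      have h1 : θ r = f ⟨r, hr⟩ := by
        rw [hθ]; simp only; rw [projIcc_of_mem h0r₀ hr]
      rw [h1, ← hfix]
      rfl
    refine ⟨θ, hθcont.continuousOn, ?_, ?_⟩
    · funext i
      rw [hθeq 0 (left_mem_Icc.2 h0r₀) i, Qf_zero]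
      rfl
    · intro r hrIoc
      have hrIcc : r ∈ Icc (0:ℝ) r₀ := Ioc_subset_Icc_self hrIoc
      apply hasDerivWithinAt_pi.2
      intro i
      have hgc : Continuous fun t => h t (θ t) i :=
        (continuous_apply i).comp (hcont.comp (continuous_id.prodMk hθcont))
      have hQd : HasDerivAt (Qf (lam i) (fun t => h t (θ t) i))
          (-(lam i / r) * Qf (lam i) (fun t => h t (θ t) i) r + h r (θ r) i) r :=
        Qf_hasDerivAt (hlam i) hrIoc.1 hgc
      have heq : EqOn (fun s => θ s i) (Qf (lam i) (fun t => h t (θ t) i))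
          (Ioc 0 r₀) := fun s hs => hθeq s (Ioc_subset_Icc_self hs) i
      have hval : Qf (lam i) (fun t => h t (θ t) i) r = θ r i :=
        (hθeq r hrIcc i).symm
      have := (hQd.hasDerivWithinAt (s := Ioc (0:ℝ) r₀)).congr
        (fun s hs => (heq hs)) (heq hrIoc)
      rw [hval] at this
      exact this
  · -- Uniqueness
    intro θ₁ θ₂ hs₁ hs₂
    exact intEq_unique hlam hlip hcont hr₀pos hMr₀ θ₁ θ₂ hs₁.1 hs₂.1
      (sol_to_intEq hlam hcont hr₀pos hs₁)
      (sol_to_intEq hlam hcont hr₀pos hs₂)
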